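/- Let X be a subset of a normed space such that X consists of all finite sums of vectors from a family (x_k)_{k ≥ 0} with ∑_{k=0}^∞ ‖x_k‖ < ∞, where each element of X is a sum of finitely many distinct x_k. Then X is totally bounded. -/
import Mathlib


open scoped BigOperators

/-- If `(x_k)` is a family in a normed real vector space with `∑ ‖x_k‖ < ∞`, then the
set of all sums of finitely many distinct `x_k`'s is totally bounded. -/
theorem firstOrderComplexity.finite_subset_sums_totallyBounded
    {E : Type*} [NormedAddCommGroup E] [NormedSpace ℝ E]
    (x : ℕ → E) (hx : Summable fun k => ‖x k‖) :
    TotallyBounded {y : E | ∃ F : Finset ℕ, y = ∑ k ∈ F, x k} := by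
  classical
  rw [Metric.totallyBounded_iff]
  intro ε hε
  obtain ⟨s, hs⟩ := hx.vanishing (Metric.ball_mem_nhds (0 : ℝ) hε)
  refine ⟨(s.powerset.image fun G => ∑ k ∈ G, x k : Finset E), Finset.finite_toSet _, ?_⟩
  rintro y ⟨F, rfl⟩
  simp only [Set.mem_iUnion, Finset.coe_image, Set.mem_image, Finset.mem_coe,
    Finset.mem_powerset, exists_prop, exists_exists_and_eq_and]
  refine ⟨F ∩ s, Finset.inter_subset_right, ?_⟩
  rw [Metric.mem_ball, dist_eq_norm]
  have h1 : ∑ k ∈ F, x k - ∑ k ∈ F ∩ s, x k = ∑ k ∈ F \ s, x k := by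
    have h2 : F \ s = F \ (F ∩ s) := by ext k; simp
    rw [h2, Finset.sum_sdiff_eq_sub Finset.inter_subset_left]
  rw [h1]
  have h3 := hs (F \ s) (Finset.sdiff_disjoint)
  simp only [Metric.mem_ball, dist_zero_right, Real.norm_eq_abs] at h3
  calc ‖∑ k ∈ F \ s, x k‖ ≤ ∑ k ∈ F \ s, ‖x k‖ := norm_sum_le _ _
    _ ≤ |∑ k ∈ F \ s, ‖x k‖| := le_abs_self _
    _ < ε := h3
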